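/- Let (𝔡, 𝔤) be a Manin pair and let j, j': 𝔤* → 𝔡 be isotropic splittings related by j'(ξ) = j(ξ) + θ(ξ) with θ: 𝔤* → 𝔤 linear and skew (η(θ(ξ)) = −ξ(θ(η))). Define μ_j(ξ,η,ζ) := ⟨[j(ξ), j(η)], j(ζ)⟩, similarly μ_{j'}, and [ξ,η]_* := q([j(ξ), j(η)]) ∈ 𝔤*. Then for all ξ, η, ζ ∈ 𝔤*: μ_{j'}(ξ,η,ζ) = μ_j(ξ,η,ζ) + [ ([ξ,η]_*)(θ(ζ)) + ζ([θ(ξ), θ(η)]) ] + [ ([η,ζ]_*)(θ(ξ)) + ξ([θ(η), θ(ζ)]) ] + [ ([ζ,ξ]_*)(θ(η)) + η([θ(ζ), θ(ξ)]) ]. (The change of the 3-vector μ under a change of isotropic splitting: μ' = μ − d_*(θ₀) + ½[[θ₀,θ₀]]_𝔤.) -/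

import Mathlib

/-- **Change of the 3-vector `μ` under a change of isotropic splitting:**
`μ' = μ − d_*(θ₀) + ½[[θ₀,θ₀]]_𝔤`.  With `μ_j(ξ,η,ζ) = ⟨[jξ,jη],jζ⟩` and
`[ξ,η]_* = q [jξ,jη]`, if `j' ξ = j ξ + θ ξ` with `θ` skew, then
`μ_{j'}(ξ,η,ζ) = μ_j(ξ,η,ζ) + ([ξ,η]_*)(θζ) + ζ [θξ,θη]
 + ([η,ζ]_*)(θξ) + ξ [θη,θζ] + ([ζ,ξ]_*)(θη) + η [θζ,θξ]`. -/
theorem stmt16 (D : Type*) [LieRing D] [LieAlgebra ℝ D] [FiniteDimensional ℝ D]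
    (B : LinearMap.BilinForm ℝ D) (hnd : B.Nondegenerate) (hsymm : B.IsSymm)
    (hinvar : ∀ x y z : D, B ⁅x, y⁆ z = B x ⁅y, z⁆)
    (g : LieSubalgebra ℝ D) (hlag : (g : Submodule ℝ D) = B.orthogonal ↑g)
    (j j' : Module.Dual ℝ g →ₗ[ℝ] D)
    (hj : ∀ (ξ : Module.Dual ℝ g) (x : g), B (j ξ) x = ξ x)
    (hjiso : ∀ ξ η : Module.Dual ℝ g, B (j ξ) (j η) = 0)
    (hj' : ∀ (ξ : Module.Dual ℝ g) (x : g), B (j' ξ) x = ξ x)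
    (hj'iso : ∀ ξ η : Module.Dual ℝ g, B (j' ξ) (j' η) = 0)
    (θ : Module.Dual ℝ g →ₗ[ℝ] g)
    (hθ : ∀ ξ η : Module.Dual ℝ g, η (θ ξ) = - ξ (θ η))
    (hrel : ∀ ξ : Module.Dual ℝ g, j' ξ = j ξ + (θ ξ : D)) :
    ∀ ξ η ζ : Module.Dual ℝ g,
      B ⁅j' ξ, j' η⁆ (j' ζ) =
        B ⁅j ξ, j η⁆ (j ζ)
          + (B ⁅j ξ, j η⁆ ((θ ζ : g) : D) + ζ ⁅θ ξ, θ η⁆)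
          + (B ⁅j η, j ζ⁆ ((θ ξ : g) : D) + ξ ⁅θ η, θ ζ⁆)
          + (B ⁅j ζ, j ξ⁆ ((θ η : g) : D) + η ⁅θ ζ, θ ξ⁆) := by

  intro ξ η ζ
  have hs : ∀ x y : D, B x y = B y x := fun x y => hsymm.eq x y
  have hgg : ∀ x y : g, B (x : D) (y : D) = 0 := by
    intro x y
    have hy : (y : D) ∈ B.orthogonal (g : Submodule ℝ D) := hlag ▸ y.2
    exact hy x x.2
  have hcb : ∀ a b : Module.Dual ℝ g, ((⁅θ a, θ b⁆ : g) : D) = ⁅(θ a : D), (θ b : D)⁆ :=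
    fun a b => rfl
  have e1 : B ⁅(θ ξ : D), j η⁆ (j ζ) = B ⁅j η, j ζ⁆ ((θ ξ : g) : D) := by
    rw [hinvar, hs]
  have e2 : B ⁅j ξ, (θ η : D)⁆ (j ζ) = B ⁅j ζ, j ξ⁆ ((θ η : g) : D) := by
    rw [hinvar, hs, hinvar, hs]
  have e4 : B ⁅j ξ, (θ η : D)⁆ ((θ ζ : g) : D) = ξ ⁅θ η, θ ζ⁆ := by
    rw [hinvar, ← hcb, hj]
  have e6 : B ⁅(θ ξ : D), j η⁆ ((θ ζ : g) : D) = η ⁅θ ζ, θ ξ⁆ := by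
    have : B ⁅(θ ξ : D), j η⁆ ((θ ζ : g) : D) = - B ⁅j η, (θ ξ : D)⁆ ((θ ζ : g) : D) := by
      rw [show ⁅(θ ξ : D), j η⁆ = -⁅j η, (θ ξ : D)⁆ from (lie_skew _ _).symm, map_neg,
        LinearMap.neg_apply]
    rw [this, hinvar, ← hcb, hj]
    have : ⁅θ ζ, θ ξ⁆ = - ⁅θ ξ, θ ζ⁆ := (lie_skew _ _).symm
    rw [this, map_neg]
  have e7 : B ⁅(θ ξ : D), (θ η : D)⁆ (j ζ) = ζ ⁅θ ξ, θ η⁆ := by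
    rw [← hcb, hs, hj]
  have e8 : B ⁅(θ ξ : D), (θ η : D)⁆ ((θ ζ : g) : D) = 0 := by
    rw [← hcb]; exact hgg _ _
  rw [hrel, hrel, hrel]
  simp only [lie_add, add_lie, map_add, LinearMap.add_apply]
  rw [e1, e2, e4, e6, e7, e8]
  ring
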